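/- arXiv:2408.02705 — 3 statements merged into one kernel-verified Lean document; each statement's English description precedes it below -/
import Mathlib

section
/- Let G be an undirected graph on n ≥ 1 vertices with transition matrix P = D^{-1}A, decay factor α ∈ (0,1), and truncation order T ≥ 1. Then the truncation error between the exact PPR matrix Π = Σ_{r=0}^∞ α(1−α)^r P^r and the T-truncated PPR matrix Π' = Σ_{r=0}^T α(1−α)^r P^r satisfies ‖Π − Π'‖_F ≤ √n·(1−α)^{T+1}. -/
open Matrix Finset

set_option maxHeartbeats 1000000 in
/-- The truncation error between the exact PPR matrix
`Π = Σ_{r=0}^∞ α(1−α)^r P^r` and the T-truncated PPR matrix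
`Π' = Σ_{r=0}^T α(1−α)^r P^r` satisfies `‖Π − Π'‖_F ≤ √n·(1−α)^{T+1}`. -/
theorem ppr_truncation_error_frobenius
    {n : ℕ} (hn : 1 ≤ n)
    (A : Matrix (Fin n) (Fin n) ℝ)
    (hA : A.IsSymm) (hAnn : ∀ i j, 0 ≤ A i j)
    (d : Fin n → ℝ) (hd : ∀ i, d i = ∑ j, A i j) (hdpos : ∀ i, 0 < d i)
    (Dinv P : Matrix (Fin n) (Fin n) ℝ)
    (hDinv : Dinv = Matrix.diagonal fun i => (d i)⁻¹)
    (hP : P = Dinv * A)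
    (α : ℝ) (hα0 : 0 < α) (hα1 : α < 1)
    (T : ℕ) (hT : 1 ≤ T)
    (PPR PPRtrunc : Matrix (Fin n) (Fin n) ℝ)
    (hPPR : PPR = ∑' r : ℕ, (α * (1 - α) ^ r) • P ^ r)
    (hPPRtrunc : PPRtrunc = ∑ r ∈ Finset.range (T + 1), (α * (1 - α) ^ r) • P ^ r) :
    Real.sqrt (∑ i, ∑ j, ((PPR - PPRtrunc) i j) ^ 2)
      ≤ Real.sqrt n * (1 - α) ^ (T + 1) := by
  have hβ0 : (0:ℝ) ≤ 1 - α := by linarith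
  have hβ1 : 1 - α < 1 := by linarith
  -- P entries nonneg, rows sum to 1
  have hPnn : ∀ i j, 0 ≤ P i j := by
    intro i j
    rw [hP, hDinv, Matrix.diagonal_mul]
    exact mul_nonneg (inv_nonneg.2 (hdpos i).le) (hAnn i j)
  have hProw : ∀ i, ∑ j, P i j = 1 := by
    intro i
    simp only [hP, hDinv, Matrix.diagonal_mul]
    rw [← Finset.mul_sum, ← hd i, inv_mul_cancel₀ (hdpos i).ne']
  -- powers of P: nonneg entries and row sums 1
  have hpow : ∀ r : ℕ, (∀ i j, 0 ≤ (P ^ r) i j) ∧ (∀ i, ∑ j, (P ^ r) i j = 1) := by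
    intro r
    induction r with
    | zero =>
      constructor
      · intro i j
        simp [Matrix.one_apply]
        split <;> norm_num
      · intro i
        simp [Matrix.one_apply]
    | succ r ih =>
      rw [pow_succ']
      constructor
      · intro i j
        rw [Matrix.mul_apply]
        exact Finset.sum_nonneg fun k _ => mul_nonneg (hPnn i k) (ih.1 k j)
      · intro i
        simp only [Matrix.mul_apply]
        rw [Finset.sum_comm]
        calc ∑ k, ∑ j, P i k * (P ^ r) k j
            = ∑ k, P i k * ∑ j, (P ^ r) k j := by
              simp [Finset.mul_sum]
          _ = 1 := by simp [ih.2, hProw i]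
  have hpowle : ∀ r i j, (P ^ r) i j ≤ 1 := by
    intro r i j
    calc (P ^ r) i j ≤ ∑ j, (P ^ r) i j :=
          Finset.single_le_sum (fun k _ => (hpow r).1 i k) (Finset.mem_univ j)
      _ = 1 := (hpow r).2 i
  -- summability entrywise
  have hgeo : Summable (fun r : ℕ => α * (1 - α) ^ r) :=
    (summable_geometric_of_lt_one hβ0 hβ1).mul_left α
  have hsum : ∀ i j, Summable (fun r : ℕ => (α * (1 - α) ^ r) * (P ^ r) i j) := by
    intro i j
    apply Summable.of_nonneg_of_le
      (fun r => mul_nonneg (mul_nonneg hα0.le (pow_nonneg hβ0 r)) ((hpow r).1 i j))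
      (fun r => ?_) hgeo
    calc (α * (1 - α) ^ r) * (P ^ r) i j ≤ (α * (1 - α) ^ r) * 1 := by
          apply mul_le_mul_of_nonneg_left (hpowle r i j)
          exact mul_nonneg hα0.le (pow_nonneg hβ0 r)
      _ = α * (1 - α) ^ r := mul_one _
  -- matrix-level summability
  have hSm : Summable (fun r : ℕ => (α * (1 - α) ^ r) • P ^ r) := by
    rw [show (fun r : ℕ => (α * (1 - α) ^ r) • P ^ r)
        = (fun r : ℕ => (α * (1 - α) ^ r) • P ^ r : ℕ → Fin n → Fin n → ℝ) from rfl]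
    apply Pi.summable.2
    intro i
    rw [Pi.summable]
    intro j
    exact hsum i j
  have happly : ∀ i j, PPR i j = ∑' r : ℕ, (α * (1 - α) ^ r) * (P ^ r) i j := by
    intro i j
    rw [hPPR]
    have h3 : (∑' r : ℕ, (α * (1 - α) ^ r) • P ^ r) i
        = ∑' r : ℕ, ((α * (1 - α) ^ r) • P ^ r) i := tsum_apply hSm
    rw [h3, tsum_apply ((Pi.summable).1 hSm i)]
    rfl
  -- tail expression
  have hE : ∀ i j, (PPR - PPRtrunc) i j
      = ∑' r : ℕ, (α * (1 - α) ^ (r + (T + 1))) * (P ^ (r + (T + 1))) i j := by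
    intro i j
    have h1 := (hsum i j).sum_add_tsum_nat_add (T + 1)
    have h2 : PPRtrunc i j = ∑ r ∈ Finset.range (T + 1), (α * (1 - α) ^ r) * (P ^ r) i j := by
      rw [hPPRtrunc]
      simp [Matrix.sum_apply]
    simp only [Matrix.sub_apply, happly, h2]
    linarith [h1]
  have hsumtail : ∀ i j, Summable (fun r : ℕ => (α * (1 - α) ^ (r + (T + 1))) * (P ^ (r + (T + 1))) i j) :=
    fun i j => (summable_nat_add_iff (f := fun r => (α * (1 - α) ^ r) * (P ^ r) i j) (T + 1)).2 (hsum i j)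
  have hEnn : ∀ i j, 0 ≤ (PPR - PPRtrunc) i j := by
    intro i j
    rw [hE i j]
    exact tsum_nonneg fun r =>
      mul_nonneg (mul_nonneg hα0.le (pow_nonneg hβ0 (r + (T + 1)))) ((hpow (r + (T + 1))).1 i j)
  have hErow : ∀ i, ∑ j, (PPR - PPRtrunc) i j = (1 - α) ^ (T + 1) := by
    intro i
    simp only [hE]
    rw [← Summable.tsum_finsetSum (fun j _ => hsumtail i j)]
    have : ∀ r : ℕ, ∑ j, (α * (1 - α) ^ (r + (T + 1))) * (P ^ (r + (T + 1))) i j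
        = α * (1 - α) ^ (T + 1) * (1 - α) ^ r := by
      intro r
      rw [← Finset.mul_sum, (hpow _).2 i, mul_one, pow_add]
      ring
    rw [tsum_congr this, tsum_mul_left, tsum_geometric_of_lt_one hβ0 hβ1]
    rw [sub_sub_cancel, mul_comm α, mul_assoc, mul_inv_cancel₀ hα0.ne', mul_one]
  set S : ℝ := (1 - α) ^ (T + 1) with hS
  have hS0 : 0 ≤ S := pow_nonneg hβ0 _
  have key : ∑ i, ∑ j, ((PPR - PPRtrunc) i j) ^ 2 ≤ n * S ^ 2 := by
    calc ∑ i, ∑ j, ((PPR - PPRtrunc) i j) ^ 2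
        ≤ ∑ i : Fin n, S ^ 2 := by
          apply Finset.sum_le_sum
          intro i _
          calc ∑ j, ((PPR - PPRtrunc) i j) ^ 2
              ≤ ∑ j, (PPR - PPRtrunc) i j * S := by
                apply Finset.sum_le_sum
                intro j _
                have hij : (PPR - PPRtrunc) i j ≤ S := by
                  rw [← hErow i]
                  exact Finset.single_le_sum (fun k _ => hEnn i k) (Finset.mem_univ j)
                calc ((PPR - PPRtrunc) i j) ^ 2
                    = (PPR - PPRtrunc) i j * (PPR - PPRtrunc) i j := sq _
                  _ ≤ (PPR - PPRtrunc) i j * S :=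
                      mul_le_mul_of_nonneg_left hij (hEnn i j)
            _ = S ^ 2 := by rw [← Finset.sum_mul, hErow i, sq]
      _ = n * S ^ 2 := by simp [mul_comm]
  calc Real.sqrt (∑ i, ∑ j, ((PPR - PPRtrunc) i j) ^ 2)
      ≤ Real.sqrt (n * S ^ 2) := Real.sqrt_le_sqrt key
    _ = Real.sqrt n * S := by
        rw [Real.sqrt_mul (Nat.cast_nonneg n), Real.sqrt_sq hS0]
end

section
/- Let B and B̃ be symmetric n×n real matrices such that B is positive semidefinite with all eigenvalues strictly less than 2, and let 0 < ε ≤ 1/2. If (1−ε)·x^⊤B̃x ≤ x^⊤Bx ≤ (1+ε)·x^⊤B̃x holds for all x ∈ ℝ^n, then every eigenvalue of the symmetric matrix B̃ − B has absolute value strictly less than 4ε. -/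
open Matrix
open scoped Pointwise

/-- If `M *ᵥ v = μ • v` for `v ≠ 0`, then `μ ∈ spectrum ℝ M`. -/
lemma aux_mem_spectrum_of_eigvec {n : ℕ} {M : Matrix (Fin n) (Fin n) ℝ} {μ : ℝ}
    {v : Fin n → ℝ} (hv : v ≠ 0) (h : M *ᵥ v = μ • v) : μ ∈ spectrum ℝ M := by
  rw [spectrum.mem_iff]
  intro hU
  have hinj := Matrix.mulVec_injective_iff_isUnit.mpr hU
  have h0 : (algebraMap ℝ (Matrix (Fin n) (Fin n) ℝ) μ - M) *ᵥ v
      = (algebraMap ℝ (Matrix (Fin n) (Fin n) ℝ) μ - M) *ᵥ 0 := by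
    rw [Matrix.mulVec_zero, Algebra.algebraMap_eq_smul_one, Matrix.sub_mulVec,
      Matrix.smul_mulVec, Matrix.one_mulVec, h, sub_self]
  exact hv (hinj h0)

/-- Conversely, any element of the spectrum of a matrix has an eigenvector. -/
lemma aux_exists_eigvec {n : ℕ} {M : Matrix (Fin n) (Fin n) ℝ} {μ : ℝ}
    (h : μ ∈ spectrum ℝ M) : ∃ v : Fin n → ℝ, v ≠ 0 ∧ M *ᵥ v = μ • v := by
  rw [spectrum.mem_iff, Matrix.isUnit_iff_isUnit_det, isUnit_iff_ne_zero, not_not] at h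
  obtain ⟨v, hv, hMv⟩ := Matrix.exists_mulVec_eq_zero_iff.mpr h
  refine ⟨v, hv, ?_⟩
  rw [Algebra.algebraMap_eq_smul_one, Matrix.sub_mulVec, Matrix.smul_mulVec,
    Matrix.one_mulVec, sub_eq_zero] at hMv
  exact hMv.symm

/-- Lemma A1: If `B` is symmetric PSD with all eigenvalues `< 2` and `B̃` is a
symmetric ε-spectral sparsifier of `B` with `0 < ε ≤ 1/2`, then every eigenvalue of `B̃ − B`
has absolute value `< 4ε`. -/
theorem sparsifier_eigenvalue_bound
    {n : ℕ} (B Bt : Matrix (Fin n) (Fin n) ℝ)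
    (hB : B.IsSymm) (hBt : Bt.IsSymm) (hBpsd : B.PosSemidef)
    (heig : ∀ μ ∈ spectrum ℝ B, μ < 2)
    (ε : ℝ) (hε0 : 0 < ε) (hε : ε ≤ 1 / 2)
    (hsparse : ∀ x : Fin n → ℝ,
      (1 - ε) * (x ⬝ᵥ Bt.mulVec x) ≤ x ⬝ᵥ B.mulVec x ∧
      x ⬝ᵥ B.mulVec x ≤ (1 + ε) * (x ⬝ᵥ Bt.mulVec x)) :
    ∀ μ ∈ spectrum ℝ (Bt - B), |μ| < 4 * ε := by
  classical
  intro μ hμ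
  obtain ⟨v, hv, hEv⟩ := aux_exists_eigvec hμ
  set b : ℝ := v ⬝ᵥ B *ᵥ v with hbdef
  set q : ℝ := v ⬝ᵥ Bt *ᵥ v with hqdef
  have hvv : 0 < v ⬝ᵥ v := by
    have h1 : (0:ℝ) ≤ v ⬝ᵥ v := Finset.sum_nonneg fun i _ => mul_self_nonneg _
    rcases h1.lt_or_eq with h | h
    · exact h
    · exact absurd (dotProduct_self_eq_zero.mp h.symm) hv
  have hb0 : 0 ≤ b := by simpa using hBpsd.dotProduct_mulVec_nonneg v
  -- The matrix `C = 2•1 - B` is positive semidefinite with trivial kernel.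
  set C : Matrix (Fin n) (Fin n) ℝ := (2:ℝ) • (1 : Matrix (Fin n) (Fin n) ℝ) - B with hCdef
  have hCa : C = algebraMap ℝ (Matrix (Fin n) (Fin n) ℝ) 2 - B := by
    rw [Algebra.algebraMap_eq_smul_one]
  have hBH : B.IsHermitian := hBpsd.1
  have hCH : C.IsHermitian := by
    simp [hCdef, Matrix.IsHermitian, Matrix.conjTranspose_sub, Matrix.conjTranspose_smul,
      hBH.eq]
    exact hB
  have hCeig : ∀ i, 0 < hCH.eigenvalues i := by
    intro i
    have hmem : hCH.eigenvalues i ∈ spectrum ℝ C := hCH.eigenvalues_mem_spectrum_real i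
    have hmem' : hCH.eigenvalues i ∈ ({2} : Set ℝ) - spectrum ℝ B := by
      rw [spectrum.singleton_sub_eq, ← hCa]
      exact hmem
    obtain ⟨x, hx, y, hy, hxy⟩ := Set.mem_sub.mp hmem'
    rw [Set.mem_singleton_iff] at hx
    subst hx
    have := heig y hy
    linarith [hxy]
  have hCpsd : C.PosSemidef := hCH.posSemidef_iff_eigenvalues_nonneg.mpr fun i => (hCeig i).le
  -- Hence `b < 2 * (v ⬝ᵥ v)`.
  have hCq : v ⬝ᵥ C *ᵥ v = 2 * (v ⬝ᵥ v) - b := by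
    simp [hCdef, Matrix.sub_mulVec, Matrix.smul_mulVec, Matrix.one_mulVec,
      dotProduct_sub, dotProduct_smul, smul_eq_mul, hbdef]
  have hC0 : 0 ≤ v ⬝ᵥ C *ᵥ v := by simpa using hCpsd.dotProduct_mulVec_nonneg v
  have hCne : v ⬝ᵥ C *ᵥ v ≠ 0 := by
    intro h0
    have hker : C *ᵥ v = 0 := by
      have := (hCpsd.dotProduct_mulVec_zero_iff v).mp (by simpa using h0)
      exact this
    have hBv : B *ᵥ v = (2:ℝ) • v := by
      have := hker
      rw [hCdef, Matrix.sub_mulVec, Matrix.smul_mulVec, Matrix.one_mulVec,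
        sub_eq_zero] at this
      exact this.symm
    exact absurd (heig 2 (aux_mem_spectrum_of_eigvec hv hBv)) (lt_irrefl 2)
  have hblt : b < 2 * (v ⬝ᵥ v) := by
    have := lt_of_le_of_ne hC0 (Ne.symm hCne)
    linarith [hCq ▸ this]
  -- The sparsifier inequalities.
  obtain ⟨h1, h2⟩ := hsparse v
  have hq0 : 0 ≤ q := by nlinarith
  have hq2b : q ≤ 2 * b := by nlinarith
  have habs : |q - b| ≤ 2 * ε * b := by
    rw [abs_le]
    constructor <;> nlinarith
  -- Eigenvalue equation.
  have hμv : μ * (v ⬝ᵥ v) = q - b := by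
    have e1 : v ⬝ᵥ (Bt - B) *ᵥ v = q - b := by
      simp [hqdef, hbdef, Matrix.sub_mulVec, dotProduct_sub]
    have e2 : v ⬝ᵥ (Bt - B) *ᵥ v = μ * (v ⬝ᵥ v) := by
      rw [hEv, dotProduct_smul, smul_eq_mul]
    rw [← e2, e1]
  have key : |μ| * (v ⬝ᵥ v) < 4 * ε * (v ⬝ᵥ v) := by
    have : |μ| * (v ⬝ᵥ v) = |q - b| := by
      rw [← hμv, abs_mul, abs_of_pos hvv]
    rw [this]
    calc |q - b| ≤ 2 * ε * b := habs
      _ < 4 * ε * (v ⬝ᵥ v) := by nlinarith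
  exact lt_of_mul_lt_mul_right key hvv.le
end

section
/- Let G be an undirected graph on n ≥ 1 vertices with transition matrix P = D^{-1}A, decay factor α ∈ (0,1), truncation order T ≥ 1, α_sum = Σ_{i=1}^T α(1−α)^i, and β_r = α(1−α)^r/α_sum. Let L̃ be a symmetric positive semidefinite ε-spectral sparsifier of L_β(G) with 0 < ε ≤ 1/2, and set Π̃ = αI + α_sum·(I − D^{-1}L̃). Then every eigenvalue of the matrix Π' − Π̃, where Π' = Σ_{r=0}^T α(1−α)^r P^r, has absolute value at most 4ε·α_sum. -/
open Matrix Finset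

lemma quad_abs_le {n : ℕ} (M : Matrix (Fin n) (Fin n) ℝ) (s : Fin n → ℝ)
    (hM : ∀ i j, 0 ≤ M i j) (hrow : ∀ i, ∑ j, M i j = s i)
    (hcol : ∀ j, ∑ i, M i j = s j) (x : Fin n → ℝ) :
    |x ⬝ᵥ M.mulVec x| ≤ ∑ i, s i * x i ^ 2 := by
  have hq : x ⬝ᵥ M.mulVec x = ∑ i, ∑ j, M i j * (x i * x j) := by
    simp only [dotProduct, Matrix.mulVec, Finset.mul_sum]
    refine Finset.sum_congr rfl fun i _ => Finset.sum_congr rfl fun j _ => by ring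
  rw [hq]
  calc |∑ i, ∑ j, M i j * (x i * x j)|
      ≤ ∑ i, ∑ j, |M i j * (x i * x j)| := by
        refine (Finset.abs_sum_le_sum_abs _ _).trans ?_
        exact Finset.sum_le_sum fun i _ => Finset.abs_sum_le_sum_abs _ _
    _ ≤ ∑ i, ∑ j, M i j * ((x i ^ 2 + x j ^ 2) / 2) := by
        refine Finset.sum_le_sum fun i _ => Finset.sum_le_sum fun j _ => ?_
        rw [abs_mul, abs_of_nonneg (hM i j)]
        refine mul_le_mul_of_nonneg_left ?_ (hM i j)
        rw [abs_mul]
        nlinarith [sq_nonneg (|x i| - |x j|), sq_abs (x i), sq_abs (x j)]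
    _ = ∑ i, s i * x i ^ 2 := by
        have h1 : ∑ i, ∑ j, M i j * ((x i ^ 2 + x j ^ 2) / 2)
            = (∑ i, ∑ j, M i j * x i ^ 2) / 2 + (∑ i, ∑ j, M i j * x j ^ 2) / 2 := by
          rw [Finset.sum_div, Finset.sum_div, ← Finset.sum_add_distrib]
          refine Finset.sum_congr rfl fun i _ => ?_
          rw [Finset.sum_div, Finset.sum_div, ← Finset.sum_add_distrib]
          refine Finset.sum_congr rfl fun j _ => by ring
        rw [h1]
        have h2 : ∑ i, ∑ j, M i j * x i ^ 2 = ∑ i, s i * x i ^ 2 := by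
          refine Finset.sum_congr rfl fun i _ => ?_
          rw [← Finset.sum_mul, hrow]
        have h3 : ∑ i : Fin n, ∑ j, M i j * x j ^ 2 = ∑ i, s i * x i ^ 2 := by
          rw [Finset.sum_comm]
          refine Finset.sum_congr rfl fun j _ => ?_
          rw [← Finset.sum_mul, hcol]
        rw [h2, h3]; ring



/-- If `L̃` is a symmetric PSD ε-spectral sparsifier of `L_β(G)` and
`Π̃ = αI + α_sum·(I − D⁻¹L̃)`, then every eigenvalue of `Π' − Π̃` has absolute value
at most `4ε·α_sum`, where `Π'` is the T-truncated PPR matrix. -/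
theorem approx_ppr_eigenvalue_bound
    {n : ℕ} (hn : 1 ≤ n)
    (A : Matrix (Fin n) (Fin n) ℝ)
    (hA : A.IsSymm) (hAnn : ∀ i j, 0 ≤ A i j)
    (d : Fin n → ℝ) (hd : ∀ i, d i = ∑ j, A i j) (hdpos : ∀ i, 0 < d i)
    (α : ℝ) (hα0 : 0 < α) (hα1 : α < 1)
    (T : ℕ) (hT : 1 ≤ T)
    (αsum : ℝ) (hαsum : αsum = ∑ i ∈ Finset.Icc 1 T, α * (1 - α) ^ i)
    (β : ℕ → ℝ) (hβ : ∀ r, β r = α * (1 - α) ^ r / αsum)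
    (D Dinv P Lβ : Matrix (Fin n) (Fin n) ℝ)
    (hD : D = Matrix.diagonal d)
    (hDinv : Dinv = Matrix.diagonal fun i => (d i)⁻¹)
    (hP : P = Dinv * A)
    (hLβ : Lβ = D - ∑ r ∈ Finset.Icc 1 T, β r • (D * P ^ r))
    (ε : ℝ) (hε0 : 0 < ε) (hε : ε ≤ 1 / 2)
    (Lt : Matrix (Fin n) (Fin n) ℝ) (hLtsymm : Lt.IsSymm) (hLtpsd : Lt.PosSemidef)
    (hsparse : ∀ x : Fin n → ℝ,
      (1 - ε) * (x ⬝ᵥ Lt.mulVec x) ≤ x ⬝ᵥ Lβ.mulVec x ∧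
      x ⬝ᵥ Lβ.mulVec x ≤ (1 + ε) * (x ⬝ᵥ Lt.mulVec x))
    (PPRtrunc PPRapprox : Matrix (Fin n) (Fin n) ℝ)
    (hPPRtrunc : PPRtrunc = ∑ r ∈ Finset.range (T + 1), (α * (1 - α) ^ r) • P ^ r)
    (hPPRapprox : PPRapprox
      = α • (1 : Matrix (Fin n) (Fin n) ℝ)
        + αsum • ((1 : Matrix (Fin n) (Fin n) ℝ) - Dinv * Lt)) :
    ∀ μ ∈ spectrum ℝ (PPRtrunc - PPRapprox), |μ| ≤ 4 * ε * αsum := by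
  intro μ hμ
  have hdne : ∀ i, d i ≠ 0 := fun i => (hdpos i).ne'
  have h1α : 0 < 1 - α := by linarith
  -- basic positivity
  have hαsum_pos : 0 < αsum := by
    rw [hαsum]
    refine Finset.sum_pos (fun i _ => by positivity) ?_
    exact ⟨1, by simp [Finset.mem_Icc, hT]⟩
  have hβnn : ∀ r, 0 ≤ β r := by
    intro r; rw [hβ]; positivity
  have hβsum : ∑ r ∈ Finset.Icc 1 T, β r = 1 := by
    have : ∑ r ∈ Finset.Icc 1 T, β r = (∑ r ∈ Finset.Icc 1 T, α * (1 - α) ^ r) / αsum := by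
      rw [Finset.sum_div]; exact Finset.sum_congr rfl fun r _ => hβ r
    rw [this, ← hαsum, div_self hαsum_pos.ne']
  -- D * Dinv = 1
  have hDDinv : D * Dinv = 1 := by
    rw [hD, hDinv, Matrix.diagonal_mul_diagonal]
    convert Matrix.diagonal_one
    exact mul_inv_cancel₀ (hdne _)
  have hDinvD : Dinv * D = 1 := by
    rw [hD, hDinv, Matrix.diagonal_mul_diagonal]
    convert Matrix.diagonal_one
    exact inv_mul_cancel₀ (hdne _)
  -- key matrix identity
  have hkey : PPRtrunc - PPRapprox = αsum • (Dinv * (Lt - Lβ)) := by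
    have hDinvLβ : Dinv * Lβ = 1 - ∑ r ∈ Finset.Icc 1 T, β r • P ^ r := by
      rw [hLβ, Matrix.mul_sub, hDinvD, Matrix.mul_sum]
      congr 1
      refine Finset.sum_congr rfl fun r _ => ?_
      rw [Matrix.mul_smul, ← Matrix.mul_assoc, hDinvD, Matrix.one_mul]
    have hrange : Finset.range (T + 1) = insert 0 (Finset.Icc 1 T) := by
      ext m; simp only [Finset.mem_range, Finset.mem_insert, Finset.mem_Icc]; omega
    have htr : PPRtrunc = α • (1 : Matrix (Fin n) (Fin n) ℝ)
        + αsum • ((1 : Matrix (Fin n) (Fin n) ℝ) - Dinv * Lβ) := by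
      rw [hPPRtrunc, hrange, Finset.sum_insert (by simp), hDinvLβ]
      simp only [pow_zero, mul_one, sub_sub_cancel, Finset.smul_sum]
      congr 1
      refine Finset.sum_congr rfl fun r _ => ?_
      rw [smul_smul, hβ, mul_div_cancel₀ _ hαsum_pos.ne']
    rw [htr, hPPRapprox]
    rw [Matrix.mul_sub, smul_sub, smul_sub, smul_sub]
    abel
  -- extract eigenvector
  have hev : Module.End.HasEigenvalue (Matrix.toLin' (PPRtrunc - PPRapprox)) μ := by
    rw [Module.End.hasEigenvalue_iff_mem_spectrum]
    have heq : spectrum ℝ (Matrix.toLin' (PPRtrunc - PPRapprox)) = spectrum ℝ (PPRtrunc - PPRapprox) := by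
      rw [← Matrix.toLin_eq_toLin']
      exact AlgEquiv.spectrum_eq (Matrix.toLinAlgEquiv (Pi.basisFun ℝ (Fin n))) (PPRtrunc - PPRapprox)
    rwa [heq]
  obtain ⟨v, hv⟩ := hev.exists_hasEigenvector
  have hv0 : v ≠ 0 := hv.right
  have hmv : (PPRtrunc - PPRapprox).mulVec v = μ • v := by
    have := hv.apply_eq_smul
    rwa [Matrix.toLin'_apply] at this
  -- multiply by D
  have hmv2 : αsum • (Lt - Lβ).mulVec v = μ • D.mulVec v := by
    have h1 : D.mulVec ((PPRtrunc - PPRapprox).mulVec v) = D.mulVec (μ • v) := by rw [hmv]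
    rw [hkey] at h1
    rw [Matrix.smul_mulVec, Matrix.mulVec_smul, Matrix.mulVec_mulVec,
      ← Matrix.mul_assoc, hDDinv, Matrix.one_mul] at h1
    rwa [Matrix.mulVec_smul] at h1
  -- dot with v
  set qD := v ⬝ᵥ D.mulVec v with hqD
  set qt := v ⬝ᵥ Lt.mulVec v with hqt
  set qβ := v ⬝ᵥ Lβ.mulVec v with hqβ
  have hdot : αsum * (qt - qβ) = μ * qD := by
    have := congrArg (fun w => v ⬝ᵥ w) hmv2
    simpa [Matrix.sub_mulVec, dotProduct_smul, dotProduct_sub, smul_eq_mul, mul_sub]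
      using this
  -- qD positive
  have hqDval : qD = ∑ i, d i * v i ^ 2 := by
    rw [hqD, hD]
    simp only [dotProduct, Matrix.mulVec_diagonal]
    exact Finset.sum_congr rfl fun i _ => by ring
  have hqDpos : 0 < qD := by
    rw [hqDval]
    obtain ⟨i, hi⟩ := Function.ne_iff.mp hv0
    refine Finset.sum_pos' (fun j _ => mul_nonneg (hdpos j).le (sq_nonneg _))
      ⟨i, Finset.mem_univ i, ?_⟩
    have hvi : v i ≠ 0 := hi
    exact mul_pos (hdpos i) (by positivity)
  -- P nonneg entries, row sums 1, weighted col sums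
  have hPnn : ∀ i j, 0 ≤ P i j := by
    intro i j
    rw [hP, hDinv]
    rw [Matrix.diagonal_mul]
    exact mul_nonneg (inv_nonneg.mpr (hdpos i).le) (hAnn i j)
  have hPrnn : ∀ r : ℕ, ∀ i j, 0 ≤ (P ^ r) i j := by
    intro r
    induction r with
    | zero =>
      intro i j
      rw [pow_zero]
      by_cases h : i = j <;> simp [Matrix.one_apply, h]
    | succ r ih =>
      intro i j
      rw [pow_succ, Matrix.mul_apply]
      exact Finset.sum_nonneg fun k _ => mul_nonneg (ih i k) (hPnn k j)
  have hPone : P.mulVec (fun _ => 1) = fun _ => 1 := by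
    funext i
    rw [hP, hDinv]
    simp only [Matrix.mulVec, dotProduct, Matrix.diagonal_mul, mul_one]
    rw [← Finset.mul_sum, ← hd, inv_mul_cancel₀ (hdne i)]
  have hProne : ∀ r : ℕ, (P ^ r).mulVec (fun _ => 1) = fun _ => 1 := by
    intro r
    induction r with
    | zero => simp
    | succ r ih =>
      rw [pow_succ, ← Matrix.mulVec_mulVec, hPone, ih]
  have hvecd : ∀ r : ℕ, Matrix.vecMul d (P ^ r) = d := by
    intro r
    induction r with
    | zero => simp
    | succ r ih =>
      rw [pow_succ, ← Matrix.vecMul_vecMul, ih]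
      funext j
      rw [hP, hDinv]
      simp only [Matrix.vecMul, dotProduct, Matrix.diagonal_mul]
      have : ∀ i, d i * ((d i)⁻¹ * A i j) = A i j := by
        intro i; rw [← mul_assoc, mul_inv_cancel₀ (hdne i), one_mul]
      simp only [this]
      rw [hd j]
      exact Finset.sum_congr rfl fun i _ => by rw [← hA.apply i j]
  -- quadratic bound for D * P^r
  have hqr : ∀ r : ℕ, |v ⬝ᵥ (D * P ^ r).mulVec v| ≤ qD := by
    intro r
    rw [hqDval]
    refine quad_abs_le (D * P ^ r) d ?_ ?_ ?_ v
    · intro i j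
      rw [hD, Matrix.diagonal_mul]
      exact mul_nonneg (hdpos i).le (hPrnn r i j)
    · intro i
      have h1 : ((D * P ^ r).mulVec (fun _ => 1)) i = d i := by
        rw [← Matrix.mulVec_mulVec, hProne r, hD]
        simp [Matrix.mulVec_diagonal]
      simpa [Matrix.mulVec, dotProduct] using h1
    · intro j
      have h1 : (Matrix.vecMul (fun _ => (1:ℝ)) (D * P ^ r)) j = d j := by
        rw [← Matrix.vecMul_vecMul]
        have : Matrix.vecMul (fun _ => (1:ℝ)) D = d := by
          funext k
          rw [hD]
          simp [Matrix.vecMul_diagonal]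
        rw [this, hvecd r]
      simpa [Matrix.vecMul, dotProduct] using h1
  -- quadratic form of Lβ
  have hqβval : qβ = qD - ∑ r ∈ Finset.Icc 1 T, β r * (v ⬝ᵥ (D * P ^ r).mulVec v) := by
    rw [hqβ, hLβ, Matrix.sub_mulVec, dotProduct_sub]
    congr 1
    have hms : ∀ (st : Finset ℕ) (f : ℕ → Matrix (Fin n) (Fin n) ℝ),
        (∑ r ∈ st, f r).mulVec v = ∑ r ∈ st, (f r).mulVec v := by
      intro st f
      induction st using Finset.induction with
      | empty => simp
      | insert _ _ h ih => rw [Finset.sum_insert h, Finset.sum_insert h, Matrix.add_mulVec, ih]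
    rw [hms]
    have hds : ∀ (st : Finset ℕ) (f : ℕ → Fin n → ℝ),
        v ⬝ᵥ (∑ r ∈ st, f r) = ∑ r ∈ st, v ⬝ᵥ f r := by
      intro st f
      induction st using Finset.induction with
      | empty => simp
      | insert _ _ h ih => rw [Finset.sum_insert h, Finset.sum_insert h, dotProduct_add, ih]
    rw [hds]
    refine Finset.sum_congr rfl fun r _ => ?_
    rw [Matrix.smul_mulVec, dotProduct_smul, smul_eq_mul]
  have hqβle : qβ ≤ 2 * qD := by
    have hsum_le : ∑ r ∈ Finset.Icc 1 T, β r * (v ⬝ᵥ (D * P ^ r).mulVec v)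
        ≥ - qD := by
      have h1 : ∀ r ∈ Finset.Icc 1 T, - (β r * qD) ≤ β r * (v ⬝ᵥ (D * P ^ r).mulVec v) := by
        intro r _
        have := hqr r
        have h2 := (abs_le.mp this).1
        calc - (β r * qD) = β r * (- qD) := by ring
          _ ≤ β r * (v ⬝ᵥ (D * P ^ r).mulVec v) :=
            mul_le_mul_of_nonneg_left h2 (hβnn r)
      calc - qD = ∑ r ∈ Finset.Icc 1 T, - (β r * qD) := by
            rw [Finset.sum_neg_distrib, ← Finset.sum_mul, hβsum, one_mul]
        _ ≤ _ := Finset.sum_le_sum h1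
      done
    rw [hqβval]; linarith
  have hqβnn : 0 ≤ qβ := by
    have h1 := (hsparse v).1
    have hqtnn : 0 ≤ qt := by
      have := hLtpsd.dotProduct_mulVec_nonneg v
      simpa [hqt] using this
    nlinarith
  have hqtle : qt ≤ 2 * qβ := by
    have h1 := (hsparse v).1
    have hqtnn : 0 ≤ qt := by
      have := hLtpsd.dotProduct_mulVec_nonneg v
      simpa [hqt] using this
    nlinarith
  have habs : |qt - qβ| ≤ 4 * ε * qD := by
    have h1 := (hsparse v).1
    have h2 := (hsparse v).2
    have hqtnn : 0 ≤ qt := by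
      have := hLtpsd.dotProduct_mulVec_nonneg v
      simpa [hqt] using this
    rw [abs_le]
    constructor <;> nlinarith
  have hfin : |μ| * qD ≤ (4 * ε * αsum) * qD := by
    have h1 : |μ| * qD = |μ * qD| := by
      rw [abs_mul, abs_of_pos hqDpos]
    rw [h1, ← hdot, abs_mul, abs_of_pos hαsum_pos]
    calc αsum * |qt - qβ| ≤ αsum * (4 * ε * qD) :=
          mul_le_mul_of_nonneg_left habs hαsum_pos.le
      _ = (4 * ε * αsum) * qD := by ring
  exact le_of_mul_le_mul_right hfin hqDpos
end
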